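/- If there exist positive integers m and r such that T_n·T_m - 1 = r^2, then n+1 is not divisible by 4. -/

import Mathlib

def T (n : ℕ) : ℕ := n * (n + 1) / 2

/-- Any natural number congruent to 3 mod 4 has a prime factor congruent to 3 mod 4. -/
lemma exists_prime_factor_three_mod_four : ∀ n : ℕ, n % 4 = 3 →
    ∃ p : ℕ, p.Prime ∧ p ∣ n ∧ p % 4 = 3 := by
  intro n
  induction n using Nat.strong_induction_on with
  | _ n ih =>
    intro hn
    have hn1 : n ≠ 1 := by omega
    obtain ⟨p, hp, hpd⟩ := Nat.exists_prime_and_dvd hn1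
    by_cases h3 : p % 4 = 3
    · exact ⟨p, hp, hpd, h3⟩
    · -- p is odd (n is odd), so p % 4 = 1
      have hodd : n % 2 = 1 := by omega
      have hp2 : p ≠ 2 := by
        rintro rfl
        obtain ⟨k, rfl⟩ := hpd
        omega
      have hp1 : p % 4 = 1 := by
        have hodd' : p % 2 = 1 := Nat.odd_iff.mp (hp.odd_of_ne_two hp2)
        omega
      obtain ⟨k, rfl⟩ := hpd
      have hmm := Nat.mul_mod p k 4
      rw [hp1, one_mul] at hmm
      have hk : k % 4 = 3 := by
        have : (k % 4) % 4 = k % 4 := Nat.mod_mod_of_dvd k dvd_rfl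
        omega
      have hklt : k < p * k := by
        have := hp.two_le
        nlinarith [Nat.pos_of_ne_zero (show k ≠ 0 by rintro rfl; omega)]
      obtain ⟨q, hq, hqd, hq3⟩ := ih k hklt hk
      exact ⟨q, hq, hqd.mul_left p, hq3⟩

theorem stmt_9 (n : ℕ) (hn : 0 < n)
    (h : ∃ m r : ℕ, 0 < m ∧ 0 < r ∧ (T n : ℤ) * T m - 1 = (r : ℤ) ^ 2) :
    ¬ (4 ∣ (n + 1)) := by
  intro h4
  obtain ⟨m, r, hm, hr, heq⟩ := h
  have hn3 : n % 4 = 3 := by omega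
  obtain ⟨p, hp, hpd, hp3⟩ := exists_prime_factor_three_mod_four n hn3
  -- T n = n * ((n+1)/2), so p ∣ T n
  have h2 : 2 ∣ (n + 1) := by omega
  have hTn : T n = n * ((n + 1) / 2) := Nat.mul_div_assoc n h2
  have hpT : p ∣ T n := hTn ▸ Dvd.dvd.mul_right hpd _
  -- T n ∣ r^2 + 1
  have hTdvd : (T n : ℤ) ∣ (r : ℤ) ^ 2 + 1 := ⟨T m, by linarith⟩
  have hpdvd : (p : ℤ) ∣ (r : ℤ) ^ 2 + 1 := dvd_trans (Int.natCast_dvd_natCast.mpr hpT) hTdvd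
  have hpdvdN : p ∣ r ^ 2 + 1 := by
    have : ((r ^ 2 + 1 : ℕ) : ℤ) = (r : ℤ) ^ 2 + 1 := by push_cast; ring
    exact_mod_cast this ▸ hpdvd
  have hsq : IsSquare (-1 : ZMod (r ^ 2 + 1)) := by
    refine ⟨(r : ZMod (r ^ 2 + 1)), ?_⟩
    have : ((r ^ 2 + 1 : ℕ) : ZMod (r ^ 2 + 1)) = 0 := ZMod.natCast_self _
    push_cast at this
    linear_combination -this
  exact (Nat.mod_four_ne_three_of_mem_primeFactors_of_isSquare_neg_one (Nat.mem_primeFactors.mpr ⟨hp, hpdvdN, by positivity⟩) hsq) hp3
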